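/- The limit as b tends to 1 from above of ( ∑_{j=1}^∞ b^j/(1 + b^j)² − 1/(2 ln(b)) ) equals −1/8. -/

import Mathlib

open Filter Real


noncomputable def phi (u : ℝ) : ℝ := Real.exp u / (1 + Real.exp u)^2
noncomputable def phi1 (u : ℝ) : ℝ := Real.exp u * (1 - Real.exp u) / (1 + Real.exp u)^3
noncomputable def phi2 (u : ℝ) : ℝ := Real.exp u * (1 - 4*Real.exp u + Real.exp u^2) / (1 + Real.exp u)^4
noncomputable def Phi (u : ℝ) : ℝ := -(1 + Real.exp u)⁻¹

lemma one_add_exp_pos (u : ℝ) : 0 < 1 + Real.exp u := by positivity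

lemma one_add_exp_ne (u : ℝ) : (1 + Real.exp u) ≠ 0 := ne_of_gt (one_add_exp_pos u)

lemma hasDerivAt_Phi (u : ℝ) : HasDerivAt Phi (phi u) u := by
  have h : HasDerivAt (fun u : ℝ => -(1 + Real.exp u)⁻¹)
      ((Real.exp u) / (1 + Real.exp u)^2) u := by
    have := ((Real.hasDerivAt_exp u).const_add 1).inv (one_add_exp_ne u)
    refine this.neg.congr_deriv ?_
    field_simp
  exact h

lemma hasDerivAt_phi (u : ℝ) : HasDerivAt phi (phi1 u) u := by
  have h := (Real.hasDerivAt_exp u).div (((Real.hasDerivAt_exp u).const_add 1).pow 2)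
    (pow_ne_zero 2 (one_add_exp_ne u))
  refine h.congr_deriv ?_
  unfold phi1
  simp only [Pi.pow_apply]
  field_simp
  ring

lemma hasDerivAt_phi1 (u : ℝ) : HasDerivAt phi1 (phi2 u) u := by
  have hnum : HasDerivAt (fun u => Real.exp u * (1 - Real.exp u))
      (Real.exp u * (1 - Real.exp u) + Real.exp u * (-Real.exp u)) u :=
    (Real.hasDerivAt_exp u).mul ((Real.hasDerivAt_exp u).neg.const_add 1)
  have h := hnum.div (((Real.hasDerivAt_exp u).const_add 1).pow 3)
    (pow_ne_zero 3 (one_add_exp_ne u))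
  refine h.congr_deriv ?_
  unfold phi2
  simp only [Pi.pow_apply]
  field_simp
  ring

lemma abs_phi2_le (u : ℝ) : |phi2 u| ≤ 3 * Real.exp (-u) := by
  have he : 0 < Real.exp u := Real.exp_pos u
  have h1 : 0 < 1 + Real.exp u := by positivity
  have habs : |phi2 u| ≤ 3 * Real.exp u / (1 + Real.exp u)^2 := by
    unfold phi2
    rw [abs_div, abs_of_pos (by positivity : (0:ℝ) < (1 + Real.exp u)^4)]
    rw [div_le_div_iff₀ (by positivity) (by positivity)]
    have h2 : |Real.exp u * (1 - 4*Real.exp u + Real.exp u^2)| ≤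
        Real.exp u * (3 * (1 + Real.exp u)^2) := by
      rw [abs_mul, abs_of_pos he]
      have : |1 - 4*Real.exp u + Real.exp u^2| ≤ 3 * (1 + Real.exp u)^2 := by
        rw [abs_le]; constructor <;> nlinarith [sq_nonneg (1 + Real.exp u), sq_nonneg (1 - Real.exp u)]
      nlinarith [this, he.le]
    calc |Real.exp u * (1 - 4*Real.exp u + Real.exp u^2)| * (1 + Real.exp u)^2
        ≤ (Real.exp u * (3 * (1 + Real.exp u)^2)) * (1 + Real.exp u)^2 := by
          apply mul_le_mul_of_nonneg_right h2 (by positivity)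
      _ = 3 * Real.exp u * (1 + Real.exp u)^4 := by ring
  refine habs.trans ?_
  rw [Real.exp_neg]
  rw [div_le_iff₀ (by positivity)]
  rw [mul_comm (3 * (Real.exp u)⁻¹), ← mul_assoc]
  have : Real.exp u ≤ (1 + Real.exp u) := by linarith [Real.exp_pos u]
  have h3 : Real.exp u * Real.exp u ≤ (1 + Real.exp u)^2 := by nlinarith
  calc 3 * Real.exp u = 3 * (Real.exp u * Real.exp u) * (Real.exp u)⁻¹ := by
        rw [mul_assoc, mul_assoc, mul_inv_cancel₀ (ne_of_gt he), mul_one]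
    _ ≤ (1 + Real.exp u)^2 * 3 * (Real.exp u)⁻¹ := by
        apply mul_le_mul_of_nonneg_right _ (by positivity)
        nlinarith

lemma midpoint_err (m h : ℝ) (hh : 0 ≤ h) :
    |Phi (m+h) - Phi (m-h) - 2*h*phi m| ≤ 6 * Real.exp (-(m-h)) * h^3 := by
  set K : ℝ := 3 * Real.exp (-(m-h)) with hK
  have hK0 : 0 ≤ K := by positivity
  -- Lipschitz bound for phi1 on [m-h, m+h]
  have hlip : ∀ x ∈ Set.Icc (m-h) (m+h), ∀ y ∈ Set.Icc (m-h) (m+h),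
      |phi1 y - phi1 x| ≤ K * |y - x| := by
    intro x hx y hy
    have := Convex.norm_image_sub_le_of_norm_hasDerivWithin_le
      (f := phi1) (f' := phi2) (s := Set.Icc (m-h) (m+h)) (C := K)
      (fun u _ => (hasDerivAt_phi1 u).hasDerivWithinAt)
      (fun u hu => by
        have h1 : |phi2 u| ≤ 3 * Real.exp (-u) := abs_phi2_le u
        have h2 : Real.exp (-u) ≤ Real.exp (-(m-h)) :=
          Real.exp_le_exp.2 (by linarith [hu.1])
        rw [Real.norm_eq_abs, hK]
        exact h1.trans (mul_le_mul_of_nonneg_left h2 (by norm_num))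
      ) (convex_Icc _ _) hx hy
    simpa [Real.norm_eq_abs] using this
  -- sigma bound: |phi (m+w) + phi (m-w) - 2 * phi m| ≤ 2*K*h*w for w in [0,h]
  have hsig : ∀ w ∈ Set.Icc (0:ℝ) h, |phi (m+w) + phi (m-w) - 2 * phi m| ≤ (2*K*h) * w := by
    intro w hw
    have hd : ∀ v ∈ Set.Icc (0:ℝ) h,
        HasDerivWithinAt (fun v => phi (m+v) + phi (m-v)) (phi1 (m+v) - phi1 (m-v))
          (Set.Icc (0:ℝ) h) v := by
      intro v _
      have h1 : HasDerivAt (fun v : ℝ => phi (m+v)) (phi1 (m+v)) v := by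
        simpa [Function.comp_def] using (hasDerivAt_phi (m+v)).comp v ((hasDerivAt_id v).const_add m)
      have h2 : HasDerivAt (fun v : ℝ => phi (m-v)) (-phi1 (m-v)) v := by
        have := (hasDerivAt_phi (m-v)).comp v ((hasDerivAt_id v).neg.const_add m)
        simpa [Function.comp_def] using this
      simpa [Pi.add_def, sub_eq_add_neg] using (h1.add h2).hasDerivWithinAt
    have hb : ∀ v ∈ Set.Icc (0:ℝ) h, ‖phi1 (m+v) - phi1 (m-v)‖ ≤ 2*K*h := by
      intro v hv
      have hmv1 : m + v ∈ Set.Icc (m-h) (m+h) := by constructor <;> [linarith [hv.1]; linarith [hv.2]]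
      have hmv2 : m - v ∈ Set.Icc (m-h) (m+h) := by constructor <;> [linarith [hv.2]; linarith [hv.1]]
      have := hlip (m-v) hmv2 (m+v) hmv1
      have habs : |(m+v) - (m-v)| = 2*v := by
        rw [show (m+v) - (m-v) = 2*v by ring, abs_of_nonneg (by linarith [hv.1])]
      rw [habs] at this
      rw [Real.norm_eq_abs]
      calc |phi1 (m+v) - phi1 (m-v)| ≤ K * (2*v) := this
        _ ≤ 2*K*h := by nlinarith [hv.2, hv.1]
    have := Convex.norm_image_sub_le_of_norm_hasDerivWithin_le
      (f := fun v => phi (m+v) + phi (m-v)) (f' := fun v => phi1 (m+v) - phi1 (m-v))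
      (s := Set.Icc (0:ℝ) h) (C := 2*K*h) hd hb (convex_Icc _ _)
      (Set.left_mem_Icc.2 hh) hw
    have e0 : phi (m+0) + phi (m-0) = 2 * phi m := by norm_num; ring
    rw [Real.norm_eq_abs, Real.norm_eq_abs] at this
    calc |phi (m+w) + phi (m-w) - 2 * phi m|
        = |(phi (m+w) + phi (m-w)) - (phi (m+0) + phi (m-0))| := by rw [e0]
      _ ≤ 2*K*h * |w - 0| := this
      _ = (2*K*h) * w := by rw [sub_zero, abs_of_nonneg hw.1]
  -- rho bound
  have hd2 : ∀ w ∈ Set.Icc (0:ℝ) h,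
      HasDerivWithinAt (fun w => Phi (m+w) - Phi (m-w) - 2*w*phi m)
        (phi (m+w) + phi (m-w) - 2 * phi m) (Set.Icc (0:ℝ) h) w := by
    intro w _
    have h1 : HasDerivAt (fun w : ℝ => Phi (m+w)) (phi (m+w)) w := by
      simpa [Function.comp_def] using (hasDerivAt_Phi (m+w)).comp w ((hasDerivAt_id w).const_add m)
    have h2 : HasDerivAt (fun w : ℝ => Phi (m-w)) (-phi (m-w)) w := by
      simpa [Function.comp_def] using (hasDerivAt_Phi (m-w)).comp w ((hasDerivAt_id w).neg.const_add m)
    have h3 : HasDerivAt (fun w : ℝ => 2*w*phi m) (2*phi m) w := by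
      have := (hasDerivAt_mul_const (c := phi m) (x := w)).const_mul 2
      simpa [mul_assoc] using this
    have h4 := (h1.sub h2).sub h3
    have h5 : phi (m+w) - -phi (m-w) - 2*phi m = phi (m+w) + phi (m-w) - 2 * phi m := by ring
    rw [h5] at h4
    exact h4.hasDerivWithinAt
  have hb2 : ∀ w ∈ Set.Icc (0:ℝ) h, ‖phi (m+w) + phi (m-w) - 2 * phi m‖ ≤ 2*K*h^2 := by
    intro w hw
    rw [Real.norm_eq_abs]
    calc |phi (m+w) + phi (m-w) - 2 * phi m| ≤ (2*K*h) * w := hsig w hw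
      _ ≤ 2*K*h^2 := by
          have := mul_le_mul_of_nonneg_left hw.2 (by positivity : (0:ℝ) ≤ 2*K*h)
          calc 2*K*h*w ≤ 2*K*h*h := this
            _ = 2*K*h^2 := by ring
  have := Convex.norm_image_sub_le_of_norm_hasDerivWithin_le
    (f := fun w => Phi (m+w) - Phi (m-w) - 2*w*phi m)
    (f' := fun w => phi (m+w) + phi (m-w) - 2 * phi m)
    (s := Set.Icc (0:ℝ) h) (C := 2*K*h^2) hd2 hb2 (convex_Icc _ _)
    (Set.left_mem_Icc.2 hh) (Set.right_mem_Icc.2 hh)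
  rw [Real.norm_eq_abs, Real.norm_eq_abs] at this
  norm_num at this
  rw [abs_of_nonneg hh] at this
  calc |Phi (m+h) - Phi (m-h) - 2*h*phi m| ≤ 2*K*h^2 * h := this
    _ = 6 * Real.exp (-(m-h)) * h^3 := by rw [hK]; ring

lemma phi_le (u : ℝ) : phi u ≤ Real.exp (-u) := by
  unfold phi
  rw [Real.exp_neg, div_le_iff₀ (by positivity), inv_mul_eq_div, le_div_iff₀ (Real.exp_pos u)]
  nlinarith [Real.exp_pos u, sq_nonneg (1 + Real.exp u)]

lemma inv_one_add_exp_le (u : ℝ) : (1 + Real.exp u)⁻¹ ≤ Real.exp (-u) := by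
  rw [Real.exp_neg, inv_le_inv₀ (by positivity) (Real.exp_pos u)]
  linarith [Real.exp_pos u]

lemma key_estimate {t : ℝ} (ht : 0 < t) :
    |(∑' j : ℕ, phi (((j:ℝ)+1)*t)) - (1 + Real.exp (t/2))⁻¹ / t|
      ≤ (3/4) * t^2 / (1 - Real.exp (-t)) := by
  set r : ℝ := Real.exp (-t) with hr
  have hr0 : 0 ≤ r := Real.exp_nonneg _
  have hr1 : r < 1 := by
    rw [hr, show (1:ℝ) = Real.exp 0 by simp]
    exact Real.exp_lt_exp.2 (by linarith)
  have hgeom : Summable (fun j : ℕ => r^j) := summable_geometric_of_lt_one hr0 hr1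
  set G : ℕ → ℝ := fun j => (1 + Real.exp (((j:ℝ) + 1/2)*t))⁻¹ with hG
  have hGpos : ∀ j, 0 < G j := fun j => by positivity
  have hGle : ∀ j : ℕ, G j ≤ r^j := by
    intro j
    have h1 : G j ≤ Real.exp (-(((j:ℝ) + 1/2)*t)) := inv_one_add_exp_le _
    refine h1.trans ?_
    have h2 : Real.exp (-(((j:ℝ) + 1/2)*t)) = r^j * Real.exp (-(t/2)) := by
      rw [hr, ← Real.exp_nat_mul, ← Real.exp_add]; ring_nf
    rw [h2]
    have h3 : Real.exp (-(t/2)) ≤ 1 := by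
      rw [show (1:ℝ) = Real.exp 0 by simp]; exact Real.exp_le_exp.2 (by linarith)
    calc r^j * Real.exp (-(t/2)) ≤ r^j * 1 :=
          mul_le_mul_of_nonneg_left h3 (by positivity)
      _ = r^j := mul_one _
  -- phi summable
  have hphile : ∀ j : ℕ, phi (((j:ℝ)+1)*t) ≤ r^j := by
    intro j
    refine (phi_le _).trans ?_
    have h2 : Real.exp (-(((j:ℝ) + 1)*t)) = r^j * Real.exp (-t) := by
      rw [hr, ← Real.exp_nat_mul, ← Real.exp_add]; ring_nf
    rw [h2]
    have h3 : Real.exp (-t) ≤ 1 := by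
      rw [show (1:ℝ) = Real.exp 0 by simp]; exact Real.exp_le_exp.2 (by linarith)
    calc r^j * Real.exp (-t) ≤ r^j * 1 := mul_le_mul_of_nonneg_left h3 (by positivity)
      _ = r^j := mul_one _
  have hphipos : ∀ j : ℕ, 0 ≤ phi (((j:ℝ)+1)*t) := fun j => by unfold phi; positivity
  have hsum_phi : Summable (fun j : ℕ => phi (((j:ℝ)+1)*t)) :=
    Summable.of_nonneg_of_le hphipos hphile hgeom
  -- telescoping sum
  have hGanti : ∀ j : ℕ, G (j+1) ≤ G j := by
    intro j
    simp only [hG]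
    apply inv_anti₀ (by positivity)
    have hle : ((j:ℝ)+1/2)*t ≤ (((j+1:ℕ):ℝ)+1/2)*t := by push_cast; nlinarith [ht.le]
    linarith [Real.exp_le_exp.2 hle]
  -- telescoping
  have hDel_nonneg : ∀ j : ℕ, 0 ≤ G j - G (j+1) := fun j => sub_nonneg.2 (hGanti j)
  have hDel_le : ∀ j : ℕ, G j - G (j+1) ≤ r^j := fun j => by
    have := hGle j; have := (hGpos (j+1)).le; linarith
  have hsum_Del : Summable (fun j : ℕ => G j - G (j+1)) :=
    Summable.of_nonneg_of_le hDel_nonneg hDel_le hgeom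
  have hGtend : Filter.Tendsto G Filter.atTop (nhds 0) := by
    have h1 : Filter.Tendsto (fun j : ℕ => ((j:ℝ) + 1/2)*t) Filter.atTop Filter.atTop := by
      apply Filter.Tendsto.atTop_mul_const ht
      exact Filter.tendsto_atTop_add_const_right _ _ tendsto_natCast_atTop_atTop
    have h2 : Filter.Tendsto (fun j : ℕ => 1 + Real.exp (((j:ℝ) + 1/2)*t)) Filter.atTop Filter.atTop :=
      Filter.tendsto_atTop_add_const_left _ _ (Real.tendsto_exp_atTop.comp h1)
    exact Filter.Tendsto.inv_tendsto_atTop h2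
  have hHasSum : HasSum (fun j : ℕ => G j - G (j+1)) (G 0) := by
    rw [hsum_Del.hasSum_iff_tendsto_nat]
    have hps : ∀ n : ℕ, ∑ i ∈ Finset.range n, (G i - G (i+1)) = G 0 - G n :=
      fun n => Finset.sum_range_sub' G n
    simp only [hps]
    simpa using (tendsto_const_nhds (x := G 0)).sub hGtend
  -- error terms
  set c : ℕ → ℝ := fun j => (3/4) * t^2 * r^j with hc
  have herr : ∀ j : ℕ, |phi (((j:ℝ)+1)*t) - (G j - G (j+1))/t| ≤ c j := by
    intro j
    have hme := midpoint_err (((j:ℝ)+1)*t) (t/2) (by linarith)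
    have e1 : ((j:ℝ)+1)*t + t/2 = (((j+1:ℕ):ℝ) + 1/2)*t := by push_cast; ring
    have e2 : ((j:ℝ)+1)*t - t/2 = ((j:ℝ) + 1/2)*t := by ring
    rw [e1, e2] at hme
    have e3 : Phi ((((j+1:ℕ):ℝ) + 1/2)*t) - Phi (((j:ℝ) + 1/2)*t) = G j - G (j+1) := by
      simp only [Phi, hG]; push_cast; ring
    rw [e3] at hme
    have hexp : Real.exp (-(((j:ℝ) + 1/2)*t)) ≤ r^j := by
      have h2 : Real.exp (-(((j:ℝ) + 1/2)*t)) = r^j * Real.exp (-(t/2)) := by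
        rw [hr, ← Real.exp_nat_mul, ← Real.exp_add]; ring_nf
      rw [h2]
      have h3 : Real.exp (-(t/2)) ≤ 1 := by
        rw [show (1:ℝ) = Real.exp 0 by simp]; exact Real.exp_le_exp.2 (by linarith)
      calc r^j * Real.exp (-(t/2)) ≤ r^j * 1 := mul_le_mul_of_nonneg_left h3 (by positivity)
        _ = r^j := mul_one _
    have hme2 : |G j - G (j+1) - t * phi (((j:ℝ)+1)*t)| ≤ (3/4) * t^3 * r^j := by
      have : 2*(t/2)*phi (((j:ℝ)+1)*t) = t * phi (((j:ℝ)+1)*t) := by ring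
      rw [this] at hme
      refine hme.trans ?_
      have := mul_le_mul_of_nonneg_right hexp (by positivity : (0:ℝ) ≤ 6 * (t/2)^3)
      calc 6 * Real.exp (-(((j:ℝ) + 1/2)*t)) * (t/2)^3
          = Real.exp (-(((j:ℝ) + 1/2)*t)) * (6 * (t/2)^3) := by ring
        _ ≤ r^j * (6 * (t/2)^3) := this
        _ = (3/4) * t^3 * r^j := by ring
    have e4 : phi (((j:ℝ)+1)*t) - (G j - G (j+1))/t
        = -((G j - G (j+1) - t * phi (((j:ℝ)+1)*t))/t) := by
      field_simp
      ring
    rw [e4, abs_neg, abs_div, abs_of_pos ht, hc]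
    rw [div_le_iff₀ ht]
    calc |G j - G (j+1) - t * phi (((j:ℝ)+1)*t)| ≤ (3/4) * t^3 * r^j := hme2
      _ = 3/4 * t^2 * r^j * t := by ring
  have hsum_c : Summable c := by
    apply Summable.mul_left
    exact hgeom
  have hsum_D : Summable (fun j : ℕ => (G j - G (j+1))/t) := hsum_Del.div_const t
  have hsum_err : Summable (fun j : ℕ => phi (((j:ℝ)+1)*t) - (G j - G (j+1))/t) :=
    hsum_phi.sub hsum_D
  have htsum_sub : (∑' j : ℕ, (phi (((j:ℝ)+1)*t) - (G j - G (j+1))/t))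
      = (∑' j : ℕ, phi (((j:ℝ)+1)*t)) - (∑' j : ℕ, (G j - G (j+1))/t) :=
    Summable.tsum_sub hsum_phi hsum_D
  have htsum_D : (∑' j : ℕ, (G j - G (j+1))/t) = G 0 / t := by
    rw [tsum_div_const, hHasSum.tsum_eq]
  have hG0 : G 0 = (1 + Real.exp (t/2))⁻¹ := by
    simp only [hG, Nat.cast_zero]
    rw [show ((0:ℝ) + 1/2)*t = t/2 by ring]
  have habs : |∑' j : ℕ, (phi (((j:ℝ)+1)*t) - (G j - G (j+1))/t)| ≤ ∑' j, c j := by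
    have h1 := norm_tsum_le_tsum_norm (f := fun j : ℕ => phi (((j:ℝ)+1)*t) - (G j - G (j+1))/t)
      (by simpa [Real.norm_eq_abs] using hsum_err.abs)
    rw [Real.norm_eq_abs] at h1
    refine h1.trans ?_
    refine Summable.tsum_le_tsum (fun j => ?_) (by simpa [Real.norm_eq_abs] using hsum_err.abs) hsum_c
    rw [Real.norm_eq_abs]
    exact herr j
  have htsum_c : (∑' j : ℕ, c j) = (3/4) * t^2 / (1 - r) := by
    rw [hc]
    rw [tsum_mul_left, tsum_geometric_of_lt_one hr0 hr1]
    ring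
  rw [htsum_sub, htsum_D, hG0, htsum_c] at habs
  exact habs

lemma g_limit :
    Tendsto (fun t : ℝ => (1 + Real.exp (t/2))⁻¹/t - 1/(2*t))
      (nhdsWithin 0 (Set.Ioi 0)) (nhds (-1/8)) := by
  have hslope : Tendsto (slope Real.exp 0) (nhdsWithin 0 {(0:ℝ)}ᶜ) (nhds 1) := by
    have := hasDerivAt_iff_tendsto_slope.mp (Real.hasDerivAt_exp 0)
    simpa [Real.exp_zero] using this
  have hhalf : Tendsto (fun t : ℝ => t/2) (nhdsWithin 0 (Set.Ioi 0))
      (nhdsWithin 0 {(0:ℝ)}ᶜ) := by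
    rw [tendsto_nhdsWithin_iff]
    constructor
    · have : Tendsto (fun t : ℝ => t/2) (nhds 0) (nhds 0) := by
        simpa using (continuous_id.div_const (2:ℝ)).tendsto 0
      exact this.mono_left nhdsWithin_le_nhds
    · filter_upwards [self_mem_nhdsWithin] with t ht
      simp only [Set.mem_compl_iff, Set.mem_singleton_iff]
      have : (0:ℝ) < t := ht
      positivity
  have hE : Tendsto (fun t : ℝ => (Real.exp (t/2) - 1)/(t/2))
      (nhdsWithin 0 (Set.Ioi 0)) (nhds 1) := by
    have := hslope.comp hhalf
    refine this.congr' ?_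
    filter_upwards [self_mem_nhdsWithin] with t ht
    simp only [Function.comp, slope_fun_def, Real.exp_zero, vsub_eq_sub, smul_eq_mul]
    rw [sub_zero]
    ring
  have hC : Tendsto (fun t : ℝ => (4*(1+Real.exp (t/2)))⁻¹)
      (nhdsWithin 0 (Set.Ioi 0)) (nhds (8⁻¹)) := by
    have hcont : Continuous (fun t : ℝ => (4*(1+Real.exp (t/2)))⁻¹) := by
      apply Continuous.inv₀
      · exact continuous_const.mul (continuous_const.add
          (Real.continuous_exp.comp (continuous_id.div_const 2)))
      · intro t; positivity
    have := hcont.tendsto 0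
    have h0 : (4*(1+Real.exp ((0:ℝ)/2)))⁻¹ = (8:ℝ)⁻¹ := by norm_num [Real.exp_zero]
    rw [h0] at this
    exact this.mono_left nhdsWithin_le_nhds
  have hprod := (hE.mul hC).neg
  have hval : -((1:ℝ) * 8⁻¹) = -1/8 := by norm_num
  rw [hval] at hprod
  refine hprod.congr' ?_
  filter_upwards [self_mem_nhdsWithin] with t ht
  have ht0 : (0:ℝ) < t := ht
  have he : (0:ℝ) < 1 + Real.exp (t/2) := by positivity
  field_simp
  ring

theorem stmt10 :
    Filter.Tendsto
      (fun b : ℝ => (∑' j : ℕ, b ^ (j + 1) / (1 + b ^ (j + 1)) ^ 2) - 1 / (2 * Real.log b))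
      (nhdsWithin 1 (Set.Ioi 1)) (nhds (-1 / 8)) := by
  have hlog : Tendsto Real.log (nhdsWithin 1 (Set.Ioi 1)) (nhdsWithin 0 (Set.Ioi 0)) := by
    rw [tendsto_nhdsWithin_iff]
    constructor
    · have := (Real.continuousAt_log one_ne_zero).tendsto
      rw [Real.log_one] at this
      exact this.mono_left nhdsWithin_le_nhds
    · filter_upwards [self_mem_nhdsWithin] with b hb
      exact Real.log_pos hb
  -- error term tends to 0
  have herr : Tendsto
      (fun b : ℝ => (∑' j : ℕ, phi (((j:ℝ)+1)*(Real.log b)))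
        - (1 + Real.exp (Real.log b/2))⁻¹/(Real.log b))
      (nhdsWithin 1 (Set.Ioi 1)) (nhds 0) := by
    apply squeeze_zero_norm'
      (a := fun b : ℝ => (3/4) * (b-1) * b)
    · filter_upwards [self_mem_nhdsWithin] with b hb
      have hb1 : (1:ℝ) < b := hb
      have hb0 : (0:ℝ) < b := by linarith
      have ht : 0 < Real.log b := Real.log_pos hb1
      have hkey := key_estimate ht
      rw [Real.norm_eq_abs]
      refine hkey.trans ?_
      have hexp : Real.exp (-Real.log b) = b⁻¹ := by
        rw [Real.exp_neg, Real.exp_log hb0]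
      rw [hexp]
      have hden : 0 < 1 - b⁻¹ := by
        rw [sub_pos, inv_lt_one_iff₀]
        right; exact hb1
      rw [div_le_iff₀ hden]
      have hlb : Real.log b ≤ b - 1 := by
        have := Real.log_le_sub_one_of_pos hb0
        linarith
      have hlb2 : (Real.log b)^2 ≤ (b-1)^2 := by nlinarith [ht.le]
      have hinv : b⁻¹ * b = 1 := inv_mul_cancel₀ (ne_of_gt hb0)
      nlinarith [ht.le, hb0.le]
    · have hcont : Continuous (fun b : ℝ => (3/4) * (b-1) * b) := by continuity
      have := hcont.tendsto 1
      norm_num at this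
      exact this.mono_left nhdsWithin_le_nhds
  -- main limit
  have hg := g_limit.comp hlog
  have hsum := herr.add hg
  rw [zero_add] at hsum
  refine hsum.congr' ?_
  filter_upwards [self_mem_nhdsWithin] with b hb
  have hb1 : (1:ℝ) < b := hb
  have hb0 : (0:ℝ) < b := by linarith
  have htsum : (∑' j : ℕ, phi (((j:ℝ)+1)*(Real.log b)))
      = ∑' j : ℕ, b ^ (j + 1) / (1 + b ^ (j + 1)) ^ 2 := by
    apply tsum_congr
    intro j
    have h1 : Real.exp (((j+1:ℕ):ℝ) * Real.log b) = b ^ (j+1) := by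
      rw [Real.exp_nat_mul, Real.exp_log hb0]
    have hc : ((j:ℝ)+1) = ((j+1:ℕ):ℝ) := by push_cast; ring
    rw [phi, hc, ← h1]
  simp only [Function.comp]
  rw [htsum]
  ring
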